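/- Let a be a real number, let f : ℝ → ℝ be convex on [a, ∞) and g : ℝ → ℝ be concave on [a, ∞), with g(z) ≤ f(z) for all z ≥ a and f(z) − g(z) → 0 as z → ∞. Then there exists a unique pair of real numbers (κ, b) such that g(z) ≤ κ·z + b ≤ f(z) for all z ≥ a; moreover f(z) − (κ·z + b) → 0 and (κ·z + b) − g(z) → 0 as z → ∞. -/

import Mathlib

open Filter Set Topology

private lemma concave_secant_aux2' {s : Set ℝ} {g : ℝ → ℝ} (hg : ConcaveOn ℝ s g)
    {x y z : ℝ} (hx : x ∈ s) (hz : z ∈ s) (hxy : x < y) (hyz : y < z) :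
    (g z - g x) / (z - x) ≤ (g y - g x) / (y - x) := by
  have h2 := hg.neg.secant_mono_aux2 hx hz hxy hyz
  simp only [Pi.neg_apply, neg_sub_neg] at h2
  rw [show g x - g y = -(g y - g x) by ring, show g x - g z = -(g z - g x) by ring,
    neg_div, neg_div, neg_le_neg_iff] at h2
  exact h2

private lemma concave_secant_aux3' {s : Set ℝ} {g : ℝ → ℝ} (hg : ConcaveOn ℝ s g)
    {x y z : ℝ} (hx : x ∈ s) (hz : z ∈ s) (hxy : x < y) (hyz : y < z) :
    (g z - g y) / (z - y) ≤ (g z - g x) / (z - x) := by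
  have h2 := hg.neg.secant_mono_aux3 hx hz hxy hyz
  simp only [Pi.neg_apply, neg_sub_neg] at h2
  rw [show g x - g z = -(g z - g x) by ring, show g y - g z = -(g z - g y) by ring,
    neg_div, neg_div, neg_le_neg_iff] at h2
  exact h2

/-- If `f` is convex on `[a, ∞)`, `g` is concave on `[a, ∞)`, `g ≤ f` there, and
`f - g → 0` at `∞`, then there is a unique affine function `z ↦ κ * z + b` lying
between `g` and `f` on `[a, ∞)`; moreover both `f` and `g` are asymptotic to it. -/
theorem unique_asymptotic_affine_between_convex_concave
    (a : ℝ) (f g : ℝ → ℝ)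
    (hf : ConvexOn ℝ (Set.Ici a) f)
    (hg : ConcaveOn ℝ (Set.Ici a) g)
    (hle : ∀ z, a ≤ z → g z ≤ f z)
    (hlim : Filter.Tendsto (fun z => f z - g z) Filter.atTop (nhds 0)) :
    (∃! p : ℝ × ℝ, ∀ z, a ≤ z → g z ≤ p.1 * z + p.2 ∧ p.1 * z + p.2 ≤ f z) ∧
    (∀ κ b : ℝ, (∀ z, a ≤ z → g z ≤ κ * z + b ∧ κ * z + b ≤ f z) →
      Filter.Tendsto (fun z => f z - (κ * z + b)) Filter.atTop (nhds 0) ∧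
      Filter.Tendsto (fun z => (κ * z + b) - g z) Filter.atTop (nhds 0)) := by
  have hh : ConvexOn ℝ (Set.Ici a) (f - g) := hf.sub hg
  have h0 : ∀ z, a ≤ z → 0 ≤ f z - g z := fun z hz => sub_nonneg.2 (hle z hz)
  -- inverse of shifted identity tends to zero
  have tinv : ∀ c : ℝ, Tendsto (fun z : ℝ => (z - c)⁻¹) atTop (nhds 0) := by
    intro c
    have t0 : Tendsto (fun z : ℝ => z - c) atTop atTop := by
      simpa [sub_eq_add_neg] using tendsto_atTop_add_const_right atTop (-c) tendsto_id
    exact tendsto_inv_atTop_zero.comp t0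
  -- f - g is antitone on [a, ∞)
  have hanti : ∀ x y, a ≤ x → x ≤ y → f y - g y ≤ f x - g x := by
    intro x y hax hxy
    rcases eq_or_lt_of_le hxy with rfl | hxy
    · exact le_rfl
    have Tψ : Tendsto (fun z => (f x - g x) + ((y - x) * (z - x)⁻¹) * ((f z - g z) - (f x - g x)))
        atTop (nhds (f x - g x)) := by
      have t2 : Tendsto (fun z : ℝ => (y - x) * (z - x)⁻¹) atTop (nhds ((y - x) * 0)) :=
        (tendsto_const_nhds : Tendsto (fun _ : ℝ => (y - x)) atTop _).mul (tinv x)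
      have t3 : Tendsto (fun z : ℝ => (f z - g z) - (f x - g x)) atTop (nhds (0 - (f x - g x))) :=
        hlim.sub (tendsto_const_nhds : Tendsto (fun _ : ℝ => (f x - g x)) atTop _)
      have t4 := ((tendsto_const_nhds : Tendsto (fun _ : ℝ => (f x - g x)) atTop _).add
        (t2.mul t3))
      simpa using t4
    refine ge_of_tendsto Tψ (Filter.eventually_atTop.2 ⟨y + 1, fun z hz => ?_⟩)
    have hyz : y < z := by linarith
    have hxz : (0:ℝ) < z - x := by linarith
    have hne : z - x ≠ 0 := ne_of_gt hxz
    have haux := hh.secant_mono_aux1 (show x ∈ Set.Ici a from hax)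
      (show z ∈ Set.Ici a from by simp only [Set.mem_Ici]; linarith) hxy hyz
    simp only [Pi.sub_apply] at haux
    have e : (z - x) * ((f x - g x) + ((y - x) * (z - x)⁻¹) * ((f z - g z) - (f x - g x)))
        = (z - y) * (f x - g x) + (y - x) * (f z - g z) := by
      field_simp
      ring
    refine le_of_mul_le_mul_left ?_ hxz
    rw [e]
    linarith [haux]
  -- slope comparison between f and g
  have hB : ∀ x y, a ≤ x → x < y → (f y - f x) / (y - x) ≤ (g y - g x) / (y - x) := by
    intro x y hax hxy
    have h1 := hanti x y hax hxy.le
    have hpos : (0:ℝ) < y - x := by linarith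
    exact (div_le_div_iff_of_pos_right hpos).2 (by linarith)
  -- the slope function of f based at a
  set S : ℝ → ℝ := fun y => (f y - f a) / (y - a) with hS
  have hSmono : ∀ y z, a < y → y < z → S y ≤ S z := by
    intro y z hay hyz
    exact hf.secant_mono_aux2 (show a ∈ Set.Ici a from Set.self_mem_Ici)
      (show z ∈ Set.Ici a from le_of_lt (hay.trans hyz)) hay hyz
  have hMa : a < a + 1 := by linarith
  set M : ℝ := (g (a + 1) - g a) / ((a + 1) - a) with hM
  have hSM1 : S (a + 1) ≤ M := hB a (a + 1) le_rfl hMa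
  have hSub : ∀ y, a < y → S y ≤ M := by
    intro y hay
    rcases lt_trichotomy y (a + 1) with hlt | heq | hgt
    · exact (hSmono y (a + 1) hay hlt).trans hSM1
    · rw [heq]; exact hSM1
    · refine (hB a y le_rfl hay).trans ?_
      exact concave_secant_aux2' hg (show a ∈ Set.Ici a from Set.self_mem_Ici)
        (show y ∈ Set.Ici a from (le_of_lt hay)) hMa hgt
  have hbdd : BddAbove (S '' Set.Ioi a) := by
    refine ⟨M, fun t ht => ?_⟩
    obtain ⟨y, hy, rfl⟩ := ht
    exact hSub y hy
  have hne : (S '' Set.Ioi a).Nonempty := ⟨S (a + 1), ⟨a + 1, hMa, rfl⟩⟩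
  set κ : ℝ := sSup (S '' Set.Ioi a) with hκ
  have hSleκ : ∀ y, a < y → S y ≤ κ := fun y hy =>
    le_csSup hbdd ⟨y, hy, rfl⟩
  -- κ is a lower bound on slopes of g
  have hκle : ∀ x y, a ≤ x → x < y → κ ≤ (g y - g x) / (y - x) := by
    intro x y hax hxy
    refine csSup_le hne ?_
    rintro t ⟨z, hz, rfl⟩
    set w : ℝ := max z y + 1 with hw
    have hzw : z < w := by
      have := le_max_left z y; simp only [hw]; linarith
    have hyw : y < w := by
      have := le_max_right z y; simp only [hw]; linarith
    have haw : a < w := lt_trans hz hzw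
    have hxw : x < w := hxy.trans hyw
    have c1 : S z ≤ S w := hSmono z w hz hzw
    have c2 : S w ≤ (f w - f x) / (w - x) := by
      rcases eq_or_lt_of_le hax with rfl | hax'
      · exact le_rfl
      · exact hf.secant_mono_aux3 (show a ∈ Set.Ici a from Set.self_mem_Ici)
          (show w ∈ Set.Ici a from le_of_lt haw) hax' hxw
    have c3 : (f w - f x) / (w - x) ≤ (g w - g x) / (w - x) := hB x w hax hxw
    have c4 : (g w - g x) / (w - x) ≤ (g y - g x) / (y - x) :=
      concave_secant_aux2' hg (show x ∈ Set.Ici a from hax)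
        (show w ∈ Set.Ici a from le_of_lt haw) hxy hyw
    exact ((c1.trans c2).trans c3).trans c4
  -- κ is an upper bound on slopes of f
  have hleκ : ∀ x y, a ≤ x → x < y → (f y - f x) / (y - x) ≤ κ := by
    intro x y hax hxy
    have hay : a < y := lt_of_le_of_lt hax hxy
    have Tχ : Tendsto (fun z : ℝ => κ + (f a - g a) * (z - a)⁻¹) atTop (nhds κ) := by
      have t2 : Tendsto (fun z : ℝ => (f a - g a) * (z - a)⁻¹) atTop (nhds ((f a - g a) * 0)) :=
        (tendsto_const_nhds : Tendsto (fun _ : ℝ => (f a - g a)) atTop _).mul (tinv a)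
      have t4 := ((tendsto_const_nhds : Tendsto (fun _ : ℝ => κ) atTop _).add t2)
      simpa using t4
    refine ge_of_tendsto Tχ (Filter.eventually_atTop.2 ⟨y + 1, fun z hz => ?_⟩)
    have hyz : y < z := by linarith
    have haz : a < z := hay.trans hyz
    have hza : (0:ℝ) < z - a := by linarith
    have c1 : (f y - f x) / (y - x) ≤ (f z - f y) / (z - y) :=
      hf.slope_mono_adjacent (show x ∈ Set.Ici a from hax)
        (show z ∈ Set.Ici a from le_of_lt haz) hxy hyz
    have c2 : (f z - f y) / (z - y) ≤ (g z - g y) / (z - y) := hB y z (le_of_lt hay) hyz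
    have c3 : (g z - g y) / (z - y) ≤ (g z - g a) / (z - a) :=
      concave_secant_aux3' hg (show a ∈ Set.Ici a from Set.self_mem_Ici)
        (show z ∈ Set.Ici a from le_of_lt haz) hay hyz
    have c4 : (g z - g a) / (z - a) ≤ κ + (f a - g a) * (z - a)⁻¹ := by
      have e : (g z - g a) / (z - a)
          = (f z - f a) / (z - a) + ((f a - g a) - (f z - g z)) / (z - a) := by
        rw [← add_div]; congr 1; ring
      rw [e]
      have b1 : (f z - f a) / (z - a) ≤ κ := hSleκ z haz
      have b2 : ((f a - g a) - (f z - g z)) / (z - a) ≤ (f a - g a) * (z - a)⁻¹ := by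
        rw [← div_eq_mul_inv]
        exact (div_le_div_iff_of_pos_right hza).2 (by linarith [h0 z (le_of_lt haz)])
      exact add_le_add b1 b2
    exact ((c1.trans c2).trans c3).trans c4
  -- f z - κ z is antitone, g z - κ z is monotone on [a, ∞)
  have hFanti : ∀ x y, a ≤ x → x ≤ y → f y - κ * y ≤ f x - κ * x := by
    intro x y hax hxy
    rcases eq_or_lt_of_le hxy with rfl | hxy
    · exact le_rfl
    have hpos : (0:ℝ) < y - x := by linarith
    have := hleκ x y hax hxy
    rw [div_le_iff₀ hpos] at this
    nlinarith
  have hGmono : ∀ x y, a ≤ x → x ≤ y → g x - κ * x ≤ g y - κ * y := by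
    intro x y hax hxy
    rcases eq_or_lt_of_le hxy with rfl | hxy
    · exact le_rfl
    have hpos : (0:ℝ) < y - x := by linarith
    have := hκle x y hax hxy
    rw [le_div_iff₀ hpos] at this
    nlinarith
  -- the intercept
  set G : ℝ → ℝ := fun z => g z - κ * z with hG
  have hGbdd : BddAbove (G '' Set.Ici a) := by
    refine ⟨f a - κ * a, fun t ht => ?_⟩
    obtain ⟨z, hz, rfl⟩ := ht
    have := hFanti a z le_rfl hz
    have := hle z hz
    simp only [hG]
    linarith
  have hGne : (G '' Set.Ici a).Nonempty := ⟨G a, ⟨a, Set.self_mem_Ici, rfl⟩⟩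
  set b : ℝ := sSup (G '' Set.Ici a) with hb
  have hgb : ∀ z, a ≤ z → g z - κ * z ≤ b := fun z hz =>
    le_csSup hGbdd ⟨z, hz, rfl⟩
  have hbf : ∀ z, a ≤ z → b ≤ f z - κ * z := by
    intro z hz
    refine csSup_le hGne ?_
    rintro t ⟨w, hw, rfl⟩
    rcases le_total w z with hwz | hzw
    · have := hGmono w z hw hwz
      have := hle z hz
      simp only [hG]; linarith
    · have := hFanti z w hz hzw
      have := hle w hw
      simp only [hG]; linarith
  have hmain : ∀ z, a ≤ z → g z ≤ κ * z + b ∧ κ * z + b ≤ f z := by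
    intro z hz
    constructor
    · have := hgb z hz; linarith
    · have := hbf z hz; linarith
  -- squeezing: any affine function between g and f is asymptotic to both
  have hsq : ∀ κ' b' : ℝ, (∀ z, a ≤ z → g z ≤ κ' * z + b' ∧ κ' * z + b' ≤ f z) →
      Filter.Tendsto (fun z => f z - (κ' * z + b')) Filter.atTop (nhds 0) ∧
      Filter.Tendsto (fun z => (κ' * z + b') - g z) Filter.atTop (nhds 0) := by
    intro κ' b' hbetween
    have hev : ∀ᶠ z : ℝ in atTop, a ≤ z := Filter.eventually_atTop.2 ⟨a, fun z hz => hz⟩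
    constructor
    · refine tendsto_of_tendsto_of_tendsto_of_le_of_le' tendsto_const_nhds hlim ?_ ?_
      · exact hev.mono fun z hz => sub_nonneg.2 (hbetween z hz).2
      · exact hev.mono fun z hz => by have := (hbetween z hz).1; linarith
    · refine tendsto_of_tendsto_of_tendsto_of_le_of_le' tendsto_const_nhds hlim ?_ ?_
      · exact hev.mono fun z hz => sub_nonneg.2 (hbetween z hz).1
      · exact hev.mono fun z hz => by have := (hbetween z hz).2; linarith
  refine ⟨⟨(κ, b), hmain, ?_⟩, hsq⟩
  -- uniqueness
  rintro ⟨κ', b'⟩ hq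
  have hev : ∀ᶠ z : ℝ in atTop, a ≤ z := Filter.eventually_atTop.2 ⟨a, fun z hz => hz⟩
  have TL : Tendsto (fun z => (κ' - κ) * z + (b' - b)) atTop (nhds 0) := by
    have hneg : Tendsto (fun z => -(f z - g z)) atTop (nhds 0) := by
      simpa using hlim.neg
    refine tendsto_of_tendsto_of_tendsto_of_le_of_le' hneg hlim ?_ ?_
    · refine hev.mono fun z hz => ?_
      have h1 := (hq z hz).1
      have h2 := (hmain z hz).2
      nlinarith [h1, h2]
    · refine hev.mono fun z hz => ?_
      have h1 := (hq z hz).2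
      have h2 := (hmain z hz).1
      nlinarith [h1, h2]
  have hc : κ' - κ = 0 := by
    have T1 : Tendsto (fun z : ℝ => ((κ' - κ) * (z + 1) + (b' - b)) - ((κ' - κ) * z + (b' - b)))
        atTop (nhds 0) := by
      have Tshift : Tendsto (fun z : ℝ => (κ' - κ) * (z + 1) + (b' - b)) atTop (nhds 0) :=
        TL.comp (tendsto_atTop_add_const_right atTop 1 tendsto_id)
      simpa using Tshift.sub TL
    have e : (fun z : ℝ => ((κ' - κ) * (z + 1) + (b' - b)) - ((κ' - κ) * z + (b' - b)))
        = fun _ : ℝ => κ' - κ := by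
      funext z; ring
    rw [e] at T1
    exact tendsto_nhds_unique tendsto_const_nhds T1
  have hd : b' - b = 0 := by
    have e : (fun z : ℝ => (κ' - κ) * z + (b' - b)) = fun _ : ℝ => b' - b := by
      funext z; rw [hc]; ring
    rw [e] at TL
    exact tendsto_nhds_unique tendsto_const_nhds TL
  have : κ' = κ := by linarith
  have : b' = b := by linarith
  simp_all
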